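/- Let K = ℚ(ζ₇ + ζ₇⁻¹) = ℚ(2cos(2π/7)) ⊆ ℝ, the maximal real subfield of the 7-th cyclotomic field, and let α₀ = 2cos(2π/7) ∈ K. For every prime number p, consider the quaternion algebra B = ( α₀, p / K ) over K, i.e., the K-algebra with basis 1, i, j, ij satisfying i² = α₀, j² = p, and ji = −ij. Then there exists an element c ∈ B with c ∉ K·1 such that c² = s·1 for some s ∈ K, and s is totally negative: all three field embeddings σ : K → ℝ satisfy σ(s) < 0. -/

import Mathlib

open Quaternion Real

/-- The maximal real subfield `K = ℚ(2 cos (2π/7))` of the 7-th cyclotomic field,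
realized inside `ℝ`. -/
noncomputable def Kcos7 : IntermediateField ℚ ℝ :=
  IntermediateField.adjoin ℚ {2 * Real.cos (2 * π / 7)}

/-- The element `α₀ = 2 cos (2π/7)` of `K = ℚ(2 cos (2π/7))`. -/
noncomputable def alpha0 : Kcos7 :=
  ⟨2 * Real.cos (2 * π / 7), IntermediateField.subset_adjoin ℚ _ (Set.mem_singleton _)⟩

lemma cos7_cubic : (2 * Real.cos (2*π/7))^3 + (2*Real.cos (2*π/7))^2 - 2*(2*Real.cos (2*π/7)) - 1 = 0 := by
  set z : ℂ := Complex.exp (2*π*Complex.I/7) with hzdef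
  have hz0 : z ≠ 0 := Complex.exp_ne_zero _
  have h7 : z ^ 7 = 1 := by
    rw [hzdef, ← Complex.exp_nat_mul]
    have : ((7:ℕ):ℂ) * (2*π*Complex.I/7) = 2*π*Complex.I := by push_cast; ring
    rw [this, Complex.exp_two_pi_mul_I]
  have hcos : ((2 * Real.cos (2*π/7) : ℝ) : ℂ) = z + z⁻¹ := by
    have harg : ((2*π/7 : ℝ) : ℂ) * Complex.I = 2*(π:ℂ)*Complex.I/7 := by push_cast; ring
    have harg' : (-((2*π/7 : ℝ) : ℂ)) * Complex.I = -(2*(π:ℂ)*Complex.I/7) := by push_cast; ring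
    rw [Complex.ofReal_mul, Complex.ofReal_cos, Complex.cos, ← Complex.exp_neg, harg', harg,
      ← hzdef]
    push_cast
    ring
  have key : ((2 * Real.cos (2*π/7) : ℝ) : ℂ)^3 + ((2 * Real.cos (2*π/7) : ℝ) : ℂ)^2 - 2*((2 * Real.cos (2*π/7) : ℝ):ℂ) - 1 = 0 := by
    have hz1 : z ≠ 1 := by
      intro h
      rw [hzdef, Complex.exp_eq_one_iff] at h
      obtain ⟨n, hn⟩ := h
      have hne : (2*(π:ℂ)*Complex.I) ≠ 0 :=
        mul_ne_zero (mul_ne_zero two_ne_zero (Complex.ofReal_ne_zero.mpr Real.pi_ne_zero))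
          Complex.I_ne_zero
      have h2 : ((1 - 7*n : ℤ):ℂ) * (2*(π:ℂ)*Complex.I) = 0 := by
        push_cast
        linear_combination 7 * hn
      rcases mul_eq_zero.mp h2 with h | h
      · have : (1 - 7*n : ℤ) = 0 := by exact_mod_cast h
        omega
      · exact absurd h hne
    have hsum : z^6+z^5+z^4+z^3+z^2+z+1 = 0 := by
      have h2 : (z - 1) * (z^6+z^5+z^4+z^3+z^2+z+1) = 0 := by linear_combination h7
      rcases mul_eq_zero.mp h2 with h | h
      · exact absurd (sub_eq_zero.mp h) hz1
      · exact h
    rw [hcos]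
    field_simp
    linear_combination z^3 * hsum - (1+z+z^2) * h7
  exact_mod_cast key

lemma alpha0_cubic : alpha0^3 + alpha0^2 - 2*alpha0 - 1 = 0 := by
  have := cos7_cubic
  ext
  push_cast [alpha0]
  convert this using 2 <;> norm_num
  left
  rfl

-- root localization
lemma root_loc (r : ℝ) (hr : r^3 + r^2 - 2*r - 1 = 0) :
    (0 < r ∧ (r-1)^2 < 1/16) ∨ (r < 0 ∧ 49/25 ≤ (r-1)^2) := by
  rcases lt_trichotomy r 0 with h | h | h
  · right
    refine ⟨h, ?_⟩
    have hle : r ≤ -2/5 := by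
      by_contra hc
      push_neg at hc
      nlinarith [sq_nonneg r, sq_nonneg (r+1), sq_nonneg (5*r+1)]
    nlinarith
  · exfalso; rw [h] at hr; norm_num at hr
  · left
    refine ⟨h, ?_⟩
    have h1 : 1 < r := by
      by_contra hc
      push_neg at hc
      nlinarith
    have h2 : r < 5/4 := by
      by_contra hc
      push_neg at hc
      nlinarith
    nlinarith

/-- In the quaternion algebra `B = (α₀, p / ℚ(2 cos (2π/7)))` (with `i² = α₀`, `j² = p`,
`ji = -ij`), there exists an element `c ∉ K·1` whose square is a totally negative scalar
`s ∈ K`. -/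
theorem exists_totally_negative_square_cos7 (p : ℕ) (hp : p.Prime) :
    ∃ c : ℍ[Kcos7, alpha0, (p : Kcos7)],
      c ∉ Set.range (algebraMap Kcos7 ℍ[Kcos7, alpha0, (p : Kcos7)]) ∧
      ∃ s : Kcos7, c ^ 2 = algebraMap Kcos7 ℍ[Kcos7, alpha0, (p : Kcos7)] s ∧
        ∀ σ : Kcos7 →+* ℝ, σ s < 0 := by
  set m : ℕ := Nat.sqrt p + 1 with hm
  have hsq1 : p < m ^ 2 := by
    have := Nat.lt_succ_sqrt p
    simpa [hm, pow_two] using this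
  have hsq2 : m ^ 2 ≤ 4 * p := by
    have h1 : 1 ≤ Nat.sqrt p := Nat.le_sqrt.mpr (by have := hp.two_le; omega)
    have h2 : Nat.sqrt p ^ 2 ≤ p := Nat.sqrt_le' p
    have : m ^ 2 = Nat.sqrt p ^ 2 + 2 * Nat.sqrt p + 1 := by rw [hm]; ring
    nlinarith [hp.two_le]
  set x : Kcos7 := (m : Kcos7) * (alpha0 - 1) with hx
  refine ⟨⟨0, x, 0, 1⟩, ?_, alpha0 * (x^2 - p), ?_, ?_⟩
  · rintro ⟨y, hy⟩
    have := congrArg QuaternionAlgebra.imK hy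
    simp [QuaternionAlgebra.coe_algebraMap] at this
  · ext <;> simp [pow_two, QuaternionAlgebra.re_mul, QuaternionAlgebra.imI_mul,
      QuaternionAlgebra.imJ_mul, QuaternionAlgebra.imK_mul, QuaternionAlgebra.coe_algebraMap] <;> ring
  · intro σ
    set r : ℝ := σ alpha0 with hr
    have hcubic : r^3 + r^2 - 2*r - 1 = 0 := by
      have := congrArg σ alpha0_cubic
      push_cast [map_add, map_sub, map_mul, map_pow, map_one, map_ofNat] at this
      simpa using this
    have hσs : σ (alpha0 * (x^2 - p)) = r * ((m*(r-1))^2 - p) := by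
      simp only [hx, map_mul, map_sub, map_pow, map_natCast, map_one, hr]
    rw [hσs]
    have hmr : (0:ℝ) < m := by positivity
    have hpr : (0:ℝ) < p := by exact_mod_cast hp.pos
    have hs1 : (p:ℝ) < (m:ℝ)^2 := by exact_mod_cast hsq1
    have hs2 : ((m:ℝ))^2 ≤ 4*p := by exact_mod_cast hsq2
    rcases root_loc r hcubic with ⟨hpos, hlt⟩ | ⟨hneg, hge⟩
    · have : (m*(r-1))^2 - p < 0 := by nlinarith
      exact mul_neg_of_pos_of_neg hpos this
    · have : 0 < (m*(r-1))^2 - p := by nlinarith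
      exact mul_neg_of_neg_of_pos hneg this
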